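/- Let K be a simplicial complex on the vertex set [m] = {1,…,m}, and let σ ⊆ τ ⊆ [m] be such that σ^∨ := [m]∖σ and τ^∨ := [m]∖τ are both faces of the Alexander dual K^∨, and σ^∨ is the unique face of K^∨ properly containing τ^∨. Then: (i) K ∪ {σ, τ} is a simplicial complex (closed under taking subsets); (ii) τ is the unique face of K ∪ {σ, τ} properly containing σ, and |τ| = |σ| + 1; and (iii) (K ∪ {σ, τ})^∨ = K^∨ ∖ {σ^∨, τ^∨}, the elementary collapse of K^∨ at the free face τ^∨. -/

import Mathlib

open Finset

/-- A simplicial complex: a collection of subsets of the vertex set, closed under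
taking subsets and containing the empty set. -/
def IsComplex {V : Type*} (K : Set (Finset V)) : Prop :=
  ∅ ∈ K ∧ ∀ σ ∈ K, ∀ τ ⊆ σ, τ ∈ K

/-- The Alexander dual of a collection `K` of subsets of `[m]`. -/
def alexDual {m : ℕ} (K : Set (Finset (Fin m))) : Set (Finset (Fin m)) :=
  {σ | Finset.univ \ σ ∉ K}

/-- Let `σ ⊆ τ ⊆ [m]` be such that `σ^∨ = [m]∖σ` and `τ^∨ = [m]∖τ` are faces of `K^∨` and
`σ^∨` is the unique face of `K^∨` properly containing `τ^∨`. Then (i) `K ∪ {σ, τ}` is a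
simplicial complex; (ii) `τ` is the unique face of `K ∪ {σ, τ}` properly containing `σ`
and `|τ| = |σ| + 1`; (iii) `(K ∪ {σ, τ})^∨ = K^∨ ∖ {σ^∨, τ^∨}`, the elementary collapse of
`K^∨` at the free face `τ^∨`. -/
theorem union_complex_and_dual_collapse {m : ℕ} (K : Set (Finset (Fin m)))
    (hK : IsComplex K) (σ τ : Finset (Fin m)) (hστ : σ ⊆ τ)
    (hσ : Finset.univ \ σ ∈ alexDual K) (hτ : Finset.univ \ τ ∈ alexDual K)
    (hlt : Finset.univ \ τ ⊂ Finset.univ \ σ)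
    (huniq : ∀ ρ ∈ alexDual K, Finset.univ \ τ ⊂ ρ → ρ = Finset.univ \ σ) :
    IsComplex (K ∪ {σ, τ}) ∧
      (σ ⊂ τ ∧ (∀ ρ ∈ K ∪ {σ, τ}, σ ⊂ ρ → ρ = τ) ∧ τ.card = σ.card + 1) ∧
      alexDual (K ∪ {σ, τ}) = alexDual K \ {Finset.univ \ σ, Finset.univ \ τ} := by
  classical
  have hcc : ∀ s : Finset (Fin m), Finset.univ \ (Finset.univ \ s) = s := fun s => by
    simp [Finset.sdiff_sdiff_self_left]
  have hσK : σ ∉ K := by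
    simpa only [alexDual, Set.mem_setOf_eq, hcc] using hσ
  have hτK : τ ∉ K := by
    simpa only [alexDual, Set.mem_setOf_eq, hcc] using hτ
  have hστ' : σ ⊂ τ := hστ.ssubset_of_ne (by rintro rfl; exact hlt.ne rfl)
  -- key: any proper subset of τ not in K equals σ
  have key : ∀ ρ : Finset (Fin m), ρ ∉ K → ρ ⊂ τ → ρ = σ := by
    intro ρ hρK hρτ
    have h1 : Finset.univ \ ρ ∈ alexDual K := by
      simpa only [alexDual, Set.mem_setOf_eq, hcc] using hρK
    have h2 : Finset.univ \ τ ⊂ Finset.univ \ ρ := by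
      constructor
      · exact Finset.sdiff_subset_sdiff (le_refl _) hρτ.1
      · intro hsub
        have := Finset.sdiff_subset_sdiff (le_refl Finset.univ) hsub
        rw [hcc, hcc] at this
        exact hρτ.2 this
    have h3 := huniq _ h1 h2
    have := congrArg (fun s => Finset.univ \ s) h3
    simpa only [hcc] using this
  have hiff : ∀ a b : Finset (Fin m), Finset.univ \ a = b ↔ a = Finset.univ \ b := by
    intro a b
    constructor
    · intro h; rw [← h, hcc]
    · intro h; rw [h, hcc]
  refine ⟨⟨Or.inl hK.1, ?_⟩, ⟨hστ', ?_, ?_⟩, ?_⟩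
  · -- closure under subsets
    rintro ρ (hρ | hρ | hρ) ρ' hρ'
    · exact Or.inl (hK.2 ρ hρ ρ' hρ')
    · -- ρ = σ
      subst hρ
      by_cases h1 : ρ' ∈ K
      · exact Or.inl h1
      · have hρ'τ : ρ' ⊆ τ := hρ'.trans hστ
        by_cases h2 : ρ' = τ
        · exact Or.inr (Or.inr h2)
        · exact Or.inr (Or.inl (key ρ' h1 ⟨hρ'τ, fun h => h2 (subset_antisymm hρ'τ h)⟩))
    · -- ρ = τ
      rw [Set.mem_singleton_iff] at hρ
      rw [hρ] at hρ'
      by_cases h1 : ρ' ∈ K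
      · exact Or.inl h1
      · by_cases h2 : ρ' = τ
        · exact Or.inr (Or.inr h2)
        · exact Or.inr (Or.inl (key ρ' h1 ⟨hρ', fun h => h2 (subset_antisymm hρ' h)⟩))
  · -- uniqueness
    rintro ρ (hρ | hρ | hρ) hσρ
    · exact absurd (hK.2 ρ hρ σ hσρ.1) hσK
    · exact absurd hρ.symm hσρ.ne
    · exact hρ
  · -- cardinality
    have h1 : σ.card + 1 ≤ τ.card := Finset.card_lt_card hστ'
    by_contra hne
    have h2 : σ.card + 1 < τ.card := lt_of_le_of_ne h1 (fun h => hne h.symm)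
    obtain ⟨C, hC1, hC2, hC3⟩ := Finset.exists_subsuperset_card_eq hστ (Nat.le_add_right _ 1) h2.le
    have hCK : C ∉ K := fun h => hσK (hK.2 C h σ hC1)
    have hCτ : C ⊂ τ := hC2.ssubset_of_ne (by
      intro h; rw [h] at hC3; omega)
    have := key C hCK hCτ
    rw [this] at hC3
    omega
  · -- Alexander dual
    ext ρ
    simp only [alexDual, Set.mem_setOf_eq, Set.mem_union, Set.mem_insert_iff,
      Set.mem_singleton_iff, Set.mem_diff, not_or]
    constructor
    · rintro ⟨hA, hB, hC⟩
      exact ⟨hA, fun h => hB ((hiff ρ σ).mpr h), fun h => hC ((hiff ρ τ).mpr h)⟩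
    · rintro ⟨hA, hB, hC⟩
      exact ⟨hA, fun h => hB ((hiff ρ σ).mp h), fun h => hC ((hiff ρ τ).mp h)⟩
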